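/- arXiv:1904.02374 — 3 statements merged into one kernel-verified Lean document; each statement's English description precedes it below -/
import Mathlib

section
/- Let O be a discrete valuation ring with uniformizer ϖ and fraction field E. Let e, D, d be natural numbers with d ≤ D, and let M be an e × D matrix with entries in O such that the rank of M, viewed as a matrix with entries in E, equals D − d. Suppose M has a (D−d) × (D−d) submatrix (obtained by choosing D−d of the rows and D−d of the columns) whose determinant is a unit of O times ϖ^v, i.e. has valuation v. Then the torsion submodule of the quotient Q of O^D by the O-submodule generated by the rows of M is annihilated by ϖ^v; that is, for every q ∈ Q with a·q = 0 for some nonzero a ∈ O, one has ϖ^v·q = 0. (Lemma 4.2 of the paper.) -/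
/-- **Lemma 4.2.** Let `O` be a discrete valuation ring with uniformizer `ϖ` and fraction
field `E`.  Let `M` be an `e × D` matrix with entries in `O` whose rank over `E` is `D - d`
(with `d ≤ D`).  If `M` has a `(D-d) × (D-d)` submatrix whose determinant has valuation `v`
(i.e. is a unit times `ϖ ^ v`), then the torsion submodule of the quotient `Q` of `O ^ D`
by the submodule generated by the rows of `M` is annihilated by `ϖ ^ v`. -/
theorem torsion_of_quotient_annihilated_by_minor_valuation
    (O : Type*) [CommRing O] [IsDomain O] [IsDiscreteValuationRing O]
    (ϖ : O) (hϖ : Irreducible ϖ)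
    (e D d v : ℕ) (hdD : d ≤ D)
    (M : Matrix (Fin e) (Fin D) O)
    (hrank : (M.map (algebraMap O (FractionRing O))).rank = D - d)
    (rows : Fin (D - d) → Fin e) (cols : Fin (D - d) → Fin D)
    (hrows : Function.Injective rows) (hcols : Function.Injective cols)
    (u : Oˣ) (hdet : (M.submatrix rows cols).det = (u : O) * ϖ ^ v) :
    ∀ q : (Fin D → O) ⧸ Submodule.span O (Set.range fun i => M i),
      (∃ a : O, a ≠ 0 ∧ a • q = 0) → ϖ ^ v • q = 0 := by
  classical
  set E := FractionRing O
  set f : O →+* E := algebraMap O E with hfdef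
  have hf : Function.Injective f := IsFractionRing.injective O E
  set Mf := M.map f with hMf
  set A := M.submatrix rows cols with hA
  set Af := A.map f with hAf
  -- the determinant of A is nonzero
  have hdetA : A.det ≠ 0 := by
    rw [hdet]
    exact mul_ne_zero (Units.ne_zero u) (pow_ne_zero _ hϖ.ne_zero)
  have hdetAf : Af.det ≠ 0 := by
    have : Af.det = f A.det := ((f : O →+* E).map_det A).symm
    rw [this]
    exact fun h => hdetA (hf (by simpa using h))
  -- chosen rows over E
  set rowsMf : Fin (D - d) → (Fin D → E) := fun i => Mf (rows i) with hrowsMf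
  -- restriction to the chosen columns
  have hindep : LinearIndependent E rowsMf := by
    have hAfindep : LinearIndependent E (fun i => Af i) :=
      Matrix.linearIndependent_rows_iff_isUnit.2
        (Matrix.isUnit_iff_isUnit_det Af |>.2 (isUnit_iff_ne_zero.2 hdetAf))
    have hcomp : (fun i => (LinearMap.funLeft E E cols) (rowsMf i)) = fun i => Af i := by
      funext i j
      simp [rowsMf, LinearMap.funLeft, Af, A, Mf, Matrix.map_apply]
    exact LinearIndependent.of_comp (LinearMap.funLeft E E cols)
      (by rw [Function.comp_def, hcomp]; exact hAfindep)
  -- row space over E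
  set RS : Submodule E (Fin D → E) := Submodule.span E (Set.range fun i => Mf i) with hRS
  have hRSfin : FiniteDimensional E RS :=
    FiniteDimensional.span_of_finite E (Set.finite_range _)
  set CS : Submodule E (Fin D → E) := Submodule.span E (Set.range rowsMf) with hCS
  have hle : CS ≤ RS := by
    rw [hCS]
    apply Submodule.span_le.2
    rintro _ ⟨i, rfl⟩
    exact Submodule.subset_span ⟨rows i, rfl⟩
  have hRSrank : Module.finrank E RS = D - d := by
    rw [hRS]
    rw [Matrix.rank_eq_finrank_span_row] at hrank
    exact hrank
  have hCSrank : Module.finrank E CS = D - d := by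
    rw [hCS, finrank_span_eq_card hindep, Fintype.card_fin]
  have hCSeq : CS = RS := by
    apply Submodule.eq_of_le_of_finrank_le hle
    rw [hRSrank, hCSrank]
  -- take the element
  intro q hq
  obtain ⟨x, rfl⟩ := Submodule.Quotient.mk_surjective _ q
  obtain ⟨a, ha, haq⟩ := hq
  rw [← Submodule.Quotient.mk_smul, Submodule.Quotient.mk_eq_zero] at haq
  rw [← Submodule.Quotient.mk_smul, Submodule.Quotient.mk_eq_zero]
  -- map x to E
  set xE : Fin D → E := fun k => f (x k) with hxE
  -- the map φ : O^D → E^D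
  set φ : (Fin D → O) →ₗ[O] (Fin D → E) :=
    LinearMap.compLeft (Algebra.linearMap O E) (Fin D) with hφ
  have hφapp : ∀ y : Fin D → O, φ y = fun k => f (y k) := fun y => rfl
  have hmem : φ (a • x) ∈ RS.restrictScalars O := by
    have : Submodule.span O (Set.range fun i => M i) ≤
        (RS.restrictScalars O).comap φ := by
      apply Submodule.span_le.2
      rintro _ ⟨i, rfl⟩
      have : φ (M i) = Mf i := by
        funext k; rfl
      simp only [Submodule.mem_comap, this, Submodule.restrictScalars_mem]
      exact Submodule.subset_span ⟨i, rfl⟩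
    exact this haq
  have hxERS : xE ∈ RS := by
    have h1 : φ (a • x) = f a • xE := by
      funext k
      simp [hφapp, hxE, Algebra.smul_def, map_mul]
    rw [h1] at hmem
    have hfa : f a ≠ 0 := fun h => ha (hf (by simpa using h))
    have := RS.smul_mem (f a)⁻¹ (Submodule.restrictScalars_mem O RS _ |>.1 hmem)
    rwa [inv_smul_smul₀ hfa] at this
  rw [← hCSeq, hCS] at hxERS
  obtain ⟨c, hc⟩ := (Submodule.mem_span_range_iff_exists_fun E).1 hxERS
  -- the Cramer computation
  have hvec : Matrix.vecMul c Af = fun j => xE (cols j) := by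
    funext j
    have := congrFun hc (cols j)
    simpa [Matrix.vecMul, dotProduct, rowsMf, Af, A, Mf, Matrix.map_apply,
      mul_comm] using this
  set w : Fin (D - d) → O := Matrix.vecMul (fun j => x (cols j)) A.adjugate with hw
  have hdc : ∀ i, f A.det * c i = f (w i) := by
    intro i
    have h1 : Matrix.vecMul (Matrix.vecMul c Af) Af.adjugate = Af.det • c := by
      rw [Matrix.vecMul_vecMul, Matrix.mul_adjugate]
      funext j
      simp [Matrix.vecMul, dotProduct, Matrix.one_apply, mul_ite, mul_comm]
    have h2 : Af.det = f A.det := ((f : O →+* E).map_det A).symm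
    have h3 : Af.adjugate = A.adjugate.map f := (f.map_adjugate A).symm
    have h4 : Matrix.vecMul (fun j => xE (cols j)) (A.adjugate.map f) i = f (w i) := by
      simp only [hw, Matrix.vecMul, dotProduct, hxE, Matrix.map_apply, map_sum,
        map_mul]
    have := congrFun h1 i
    rw [hvec, h3, h4] at this
    rw [this, h2, Pi.smul_apply, smul_eq_mul]
  -- conclude
  have key : ϖ ^ v • x = ∑ i, (((u⁻¹ : Oˣ) : O) * w i) • M (rows i) := by
    funext k
    apply hf
    have hxk : f (x k) = ∑ i, c i * f (M (rows i) k) := by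
      have := congrFun hc k
      simpa [rowsMf, Mf, Matrix.map_apply, mul_comm] using this.symm
    have hcoef : ∀ i, f (ϖ ^ v) * c i = f (((u⁻¹ : Oˣ) : O) * w i) := by
      intro i
      have hu : f (((u⁻¹ : Oˣ) : O)) * f ((u : O)) = 1 := by
        rw [← map_mul, ← map_one f]
        congr 1
        exact_mod_cast u.inv_mul
      have := hdc i
      rw [hdet, map_mul] at this
      calc f (ϖ ^ v) * c i = f (((u⁻¹ : Oˣ) : O)) * f ((u : O)) * (f (ϖ ^ v) * c i) := by
            rw [hu, one_mul]
        _ = f (((u⁻¹ : Oˣ) : O)) * (f ((u : O)) * f (ϖ ^ v) * c i) := by ring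
        _ = f (((u⁻¹ : Oˣ) : O)) * f (w i) := by rw [this]
        _ = f (((u⁻¹ : Oˣ) : O) * w i) := by rw [map_mul]
    calc f ((ϖ ^ v • x) k) = f (ϖ ^ v) * f (x k) := by
          simp [map_mul]
      _ = f (ϖ ^ v) * ∑ i, c i * f (M (rows i) k) := by rw [hxk]
      _ = ∑ i, (f (ϖ ^ v) * c i) * f (M (rows i) k) := by
          rw [Finset.mul_sum]; congr 1; funext i; ring
      _ = ∑ i, f (((u⁻¹ : Oˣ) : O) * w i) * f (M (rows i) k) := by
          congr 1; funext i; rw [hcoef i]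
      _ = f ((∑ i, (((u⁻¹ : Oˣ) : O) * w i) • M (rows i)) k) := by
          simp [map_sum, map_mul]
  rw [key]
  exact Submodule.sum_mem _ fun i _ =>
    Submodule.smul_mem _ _ (Submodule.subset_span ⟨rows i, rfl⟩)
end

section
/- Let p be a prime, Γ a group, and W a finite abelian group killed by p, equipped with a Γ-action making it a simple (irreducible) F_p[Γ]-module; let k_W = End_{F_p[Γ]}(W) be the ring of Γ-equivariant endomorphisms of W (a finite field). Let Δ be a normal subgroup of Γ acting trivially on W, and assume that every 1-cocycle Γ → W that vanishes identically on Δ is a 1-coboundary (this is the condition H^1(Γ/Δ, W) = 0). Let ψ_1, …, ψ_s : Γ → W be 1-cocycles whose cohomology classes are linearly independent over k_W, i.e. whenever a_1, …, a_s ∈ k_W are such that g ↦ Σ_i a_i(ψ_i(g)) is a 1-coboundary, then a_1 = ⋯ = a_s = 0. Then the map Δ → W^s sending δ to (ψ_1(δ), …, ψ_s(δ)) is a surjective group homomorphism. (This is the group-theoretic content of Lemma 5.4 of the paper: the fixed fields K_{ψ_1}, …, K_{ψ_s} of the cocycles are strongly linearly disjoint over K, with Gal(K_{ψ_i}/K)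 ≅ W via ψ_i.) -/
section Helpers

variable {W : Type*} [AddCommGroup W] {s : ℕ}

lemma snoc_add (a b : Fin s → W) (x y : W) :
    Fin.snoc a x + Fin.snoc b y = (Fin.snoc (a + b) (x + y) : Fin (s+1) → W) := by
  funext i
  refine Fin.lastCases ?_ ?_ i <;> simp [Fin.snoc_last, Fin.snoc_castSucc]

lemma snoc_zero' : (Fin.snoc (0 : Fin s → W) (0 : W) : Fin (s+1) → W) = 0 := by
  funext i
  refine Fin.lastCases ?_ ?_ i <;> simp [Fin.snoc_last, Fin.snoc_castSucc]

lemma eq_snoc_of_init_eq_zero (v : Fin (s+1) → W) (h : Fin.init v = 0) :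
    v = Fin.snoc (0 : Fin s → W) (v (Fin.last s)) := by
  funext i
  refine Fin.lastCases ?_ ?_ i
  · simp [Fin.snoc_last]
  · intro j
    have := congrFun h j
    simp only [Fin.init] at this
    simp [Fin.snoc_castSucc, this]

variable {Γ : Type*} [Group Γ] [DistribMulAction Γ W]

lemma smul_snoc (g : Γ) (a : Fin s → W) (x : W) :
    (fun i => g • (Fin.snoc a x : Fin (s+1) → W) i) = Fin.snoc (fun i => g • a i) (g • x) := by
  funext i
  refine Fin.lastCases ?_ ?_ i <;> simp [Fin.snoc_last, Fin.snoc_castSucc]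

lemma keyA {Γ : Type*} [Group Γ] (W : Type*) [AddCommGroup W] [DistribMulAction Γ W]
    (hW0 : Nontrivial W)
    (hsimple : ∀ U : AddSubgroup W, (∀ (g : Γ), ∀ w ∈ U, g • w ∈ U) → U = ⊥ ∨ U = ⊤) :
    ∀ (s : ℕ) (V : AddSubgroup (Fin s → W)),
      (∀ (g : Γ) (v), v ∈ V → (fun i => g • v i) ∈ V) → V ≠ ⊤ →
      ∃ π : (Fin s → W) →+ W, (∀ (g : Γ) (v), π (fun i => g • v i) = g • π v) ∧ π ≠ 0 ∧
        ∀ v ∈ V, π v = 0 := by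
  intro s
  induction s with
  | zero =>
      intro V _ hVne
      exact absurd (by ext v; simpa using (Subsingleton.elim v 0 ▸ V.zero_mem)) hVne
  | succ s ih =>
      intro V hVst hVne
      set q : (Fin (s+1) → W) →+ (Fin s → W) :=
        AddMonoidHom.mk' (fun v => Fin.init v) (fun u v => rfl) with hq
      have hinit_smul : ∀ (g : Γ) (v : Fin (s+1) → W),
          Fin.init (fun i => g • v i) = fun i => g • Fin.init v i := fun g v => rfl
      set V' : AddSubgroup (Fin s → W) := V.map q with hV'def
      have hV'st : ∀ (g : Γ) (w), w ∈ V' → (fun i => g • w i) ∈ V' := by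
        rintro g w ⟨v, hv, rfl⟩
        exact ⟨fun i => g • v i, hVst g v hv, (hinit_smul g v)⟩
      by_cases hV' : V' = ⊤
      · -- image of init is everything
        have hsurj : ∀ w : Fin s → W, ∃ u, u ∈ V ∧ Fin.init u = w := by
          intro w
          have : w ∈ V' := hV' ▸ AddSubgroup.mem_top w
          rcases this with ⟨u, hu, hu'⟩
          exact ⟨u, hu, hu'⟩
        set U : AddSubgroup W :=
          { carrier := {x | (Fin.snoc (0 : Fin s → W) x : Fin (s+1) → W) ∈ V}
            zero_mem' := by simpa [snoc_zero'] using V.zero_mem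
            add_mem' := by
              intro x y hx hy
              have := V.add_mem hx hy
              rwa [snoc_add, add_zero] at this
            neg_mem' := by
              intro x hx
              have := V.neg_mem hx
              have hneg : -(Fin.snoc (0 : Fin s → W) x : Fin (s+1) → W)
                  = Fin.snoc (0 : Fin s → W) (-x) := by
                funext i
                refine Fin.lastCases ?_ ?_ i <;> simp [Fin.snoc_last, Fin.snoc_castSucc]
              rwa [hneg] at this } with hUdef
        have hUst : ∀ (g : Γ), ∀ x ∈ U, g • x ∈ U := by
          intro g x hx
          have := hVst g _ hx
          rwa [smul_snoc, show (fun i => g • (0 : Fin s → W) i) = 0 by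
            funext i; simp] at this
        rcases hsimple U hUst with hUbot | hUtop
        · -- graph case
          have hF0 : ∀ w : Fin s → W, ((hsurj w).choose ∈ V ∧ Fin.init (hsurj w).choose = w) :=
            fun w => (hsurj w).choose_spec
          set F : (Fin s → W) → W := fun w => (hsurj w).choose (Fin.last s) with hFdef
          have huniq : ∀ u ∈ V, u (Fin.last s) = F (Fin.init u) := by
            intro u hu
            set u' := (hsurj (Fin.init u)).choose with hu'def
            have h1 : u' ∈ V := (hF0 (Fin.init u)).1
            have h2 : Fin.init u' = Fin.init u := (hF0 (Fin.init u)).2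
            have hd : u - u' ∈ V := V.sub_mem hu h1
            have hdi : Fin.init (u - u') = 0 := by
              funext i
              have := congrFun h2 i
              simp only [Fin.init] at this ⊢
              simp [this]
            have := eq_snoc_of_init_eq_zero _ hdi
            have hmem : (u - u') (Fin.last s) ∈ U := by
              change (Fin.snoc (0 : Fin s → W) ((u - u') (Fin.last s)) : Fin (s+1) → W) ∈ V
              rwa [← this]
            rw [hUbot] at hmem
            have : u (Fin.last s) - u' (Fin.last s) = 0 := hmem
            have := sub_eq_zero.mp this
            simpa [hFdef] using this
          have hFadd : ∀ w w', F (w + w') = F w + F w' := by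
            intro w w'
            have h1 := hF0 w; have h2 := hF0 w'
            have hmem : (hsurj w).choose + (hsurj w').choose ∈ V := V.add_mem h1.1 h2.1
            have hini : Fin.init ((hsurj w).choose + (hsurj w').choose) = w + w' := by
              funext i
              have a1 := congrFun h1.2 i; have a2 := congrFun h2.2 i
              simp only [Fin.init] at a1 a2 ⊢
              simp [a1, a2]
            have := huniq _ hmem
            rw [hini] at this
            exact this.symm
          have hFsmul : ∀ (g : Γ) (w), F (fun i => g • w i) = g • F w := by
            intro g w
            have h1 := hF0 w
            have hmem : (fun i => g • (hsurj w).choose i) ∈ V := hVst g _ h1.1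
            have hini : Fin.init (fun i => g • (hsurj w).choose i) = fun i => g • w i := by
              funext i
              have a1 := congrFun h1.2 i
              simp only [Fin.init] at a1 ⊢
              simp [a1]
            have := huniq _ hmem
            rw [hini] at this
            exact this.symm
          have hF00 : F 0 = 0 := by
            have := huniq 0 V.zero_mem
            simpa [show Fin.init (0 : Fin (s+1) → W) = 0 from rfl] using this.symm
          refine ⟨AddMonoidHom.mk' (fun v => v (Fin.last s) - F (Fin.init v)) ?_, ?_, ?_, ?_⟩
          · intro u v
            have : Fin.init (u + v) = Fin.init u + Fin.init v := rfl
            simp only [this, hFadd, Pi.add_apply]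
            abel
          · intro g v
            simp only [AddMonoidHom.mk'_apply]
            rw [hinit_smul, hFsmul, smul_sub]
          · obtain ⟨x, hx⟩ := exists_ne (0 : W)
            intro h0
            have := congrFun (congrArg DFunLike.coe h0)
              (Fin.snoc (0 : Fin s → W) x : Fin (s+1) → W)
            simp only [AddMonoidHom.mk'_apply, AddMonoidHom.zero_apply] at this
            rw [Fin.snoc_last, Fin.init_snoc, hF00, sub_zero] at this
            exact hx this
          · intro v hv
            simp only [AddMonoidHom.mk'_apply]
            rw [← huniq v hv, sub_self]
        · -- U = ⊤ forces V = ⊤, contradiction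
          exfalso
          apply hVne
          ext v
          simp only [AddSubgroup.mem_top, iff_true]
          obtain ⟨u, hu, hui⟩ := hsurj (Fin.init v)
          have hc : (Fin.snoc (0 : Fin s → W) (v (Fin.last s) - u (Fin.last s))
              : Fin (s+1) → W) ∈ V := by
            have : v (Fin.last s) - u (Fin.last s) ∈ U := hUtop ▸ AddSubgroup.mem_top _
            exact this
          have : v = u + Fin.snoc (0 : Fin s → W) (v (Fin.last s) - u (Fin.last s)) := by
            funext i
            refine Fin.lastCases ?_ ?_ i
            · simp [Fin.snoc_last]
            · intro j
              have := congrFun hui j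
              simp only [Fin.init] at this
              simp [Fin.snoc_castSucc, this]
          rw [this]
          exact V.add_mem hu hc
      · -- induct
        obtain ⟨π', hπ'eq, hπ'ne, hπ'ker⟩ := ih V' hV'st hV'
        refine ⟨π'.comp q, ?_, ?_, ?_⟩
        · intro g v
          have : q (fun i => g • v i) = fun i => g • q v i := hinit_smul g v
          simp only [AddMonoidHom.comp_apply, this, hπ'eq]
        · intro h0
          apply hπ'ne
          refine AddMonoidHom.ext fun w => ?_
          have := congrFun (congrArg DFunLike.coe h0) (Fin.snoc w 0 : Fin (s+1) → W)
          simpa [show q (Fin.snoc w 0 : Fin (s+1) → W) = w from Fin.init_snoc (α := fun _ => W) _ _] using this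
        · intro v hv
          exact hπ'ker _ ⟨v, hv, rfl⟩

end Helpers

/-- **Lemma 5.4 (group-theoretic content).**  Let `p` be a prime, `Γ` a group, and `W` a finite
abelian group killed by `p`, with a `Γ`-action making it a simple `𝔽_p[Γ]`-module.  Let
`Δ ⊴ Γ` be a normal subgroup acting trivially on `W` such that every 1-cocycle `Γ → W`
vanishing identically on `Δ` is a 1-coboundary (i.e. `H¹(Γ/Δ, W) = 0`).  If `ψ₁, …, ψ_s` are
1-cocycles whose classes are linearly independent over `k_W = End_{𝔽_p[Γ]}(W)`, then the map
`Δ → W^s`, `δ ↦ (ψ₁(δ), …, ψ_s(δ))`, is a surjective group homomorphism. -/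
theorem cocycles_surjective_on_kernel
    (p : ℕ) (hp : p.Prime)
    (Γ : Type*) [Group Γ]
    (W : Type*) [AddCommGroup W] [Finite W] [DistribMulAction Γ W]
    (hWp : ∀ w : W, p • w = 0)
    (hW0 : Nontrivial W)
    (hsimple : ∀ U : AddSubgroup W, (∀ (g : Γ), ∀ w ∈ U, g • w ∈ U) → U = ⊥ ∨ U = ⊤)
    (Δ : Subgroup Γ) (hΔ : Δ.Normal)
    (htriv : ∀ δ ∈ Δ, ∀ w : W, δ • w = w)
    (hH1 : ∀ f : Γ → W, (∀ g h : Γ, f (g * h) = f g + g • f h) →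
      (∀ δ ∈ Δ, f δ = 0) → ∃ w : W, ∀ g : Γ, f g = g • w - w)
    (s : ℕ) (ψ : Fin s → Γ → W)
    (hcoc : ∀ i, ∀ g h : Γ, ψ i (g * h) = ψ i g + g • ψ i h)
    (hindep : ∀ a : Fin s → (W →+ W),
      (∀ i, ∀ (g : Γ) (w : W), a i (g • w) = g • a i w) →
      (∃ w : W, ∀ g : Γ, (∑ i, a i (ψ i g)) = g • w - w) →
      ∀ i, a i = 0) :
    (∀ δ₁ ∈ Δ, ∀ δ₂ ∈ Δ, ∀ i, ψ i (δ₁ * δ₂) = ψ i δ₁ + ψ i δ₂) ∧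
    (∀ w : Fin s → W, ∃ δ ∈ Δ, ∀ i, ψ i δ = w i) := by
  have hone : ∀ i, ψ i 1 = 0 := by
    intro i
    have := hcoc i 1 1
    rw [one_mul, one_smul] at this
    exact (left_eq_add.mp this)
  have hadd : ∀ δ₁ ∈ Δ, ∀ δ₂ ∈ Δ, ∀ i, ψ i (δ₁ * δ₂) = ψ i δ₁ + ψ i δ₂ := by
    intro δ₁ h₁ δ₂ h₂ i
    rw [hcoc i δ₁ δ₂, htriv δ₁ h₁]
  have hinv : ∀ δ ∈ Δ, ∀ i, ψ i δ⁻¹ = -ψ i δ := by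
    intro δ hδ i
    have := hcoc i δ δ⁻¹
    rw [mul_inv_cancel, hone, htriv δ hδ] at this
    exact eq_neg_of_add_eq_zero_right this.symm
  refine ⟨hadd, ?_⟩
  have hconj : ∀ (g : Γ), ∀ δ ∈ Δ, ∀ i, ψ i (g * δ * g⁻¹) = g • ψ i δ := by
    intro g δ hδ i
    have h1 : ψ i (g * g⁻¹) = 0 := by rw [mul_inv_cancel, hone]
    have h2 : ψ i g + g • ψ i g⁻¹ = 0 := by rw [← hcoc i g g⁻¹, h1]
    calc ψ i (g * δ * g⁻¹) = ψ i (g * (δ * g⁻¹)) := by rw [mul_assoc]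
      _ = ψ i g + g • (ψ i δ + δ • ψ i g⁻¹) := by rw [hcoc i g (δ * g⁻¹), hcoc i δ g⁻¹]
      _ = ψ i g + g • (ψ i δ + ψ i g⁻¹) := by rw [htriv δ hδ]
      _ = g • ψ i δ + (ψ i g + g • ψ i g⁻¹) := by rw [smul_add]; abel
      _ = g • ψ i δ := by rw [h2, add_zero]
  by_contra hne
  push_neg at hne
  obtain ⟨w₀, hw₀⟩ := hne
  set V : AddSubgroup (Fin s → W) :=
    { carrier := {v | ∃ δ ∈ Δ, ∀ i, ψ i δ = v i}
      zero_mem' := ⟨1, Δ.one_mem, fun i => by simp [hone]⟩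
      add_mem' := by
        rintro v v' ⟨δ, hδ, hv⟩ ⟨δ', hδ', hv'⟩
        exact ⟨δ * δ', Δ.mul_mem hδ hδ', fun i => by
          rw [hadd δ hδ δ' hδ' i, hv i, hv' i]; rfl⟩
      neg_mem' := by
        rintro v ⟨δ, hδ, hv⟩
        exact ⟨δ⁻¹, Δ.inv_mem hδ, fun i => by rw [hinv δ hδ i, hv i]; rfl⟩ } with hVdef
  have hVst : ∀ (g : Γ) (v), v ∈ V → (fun i => g • v i) ∈ V := by
    rintro g v ⟨δ, hδ, hv⟩
    exact ⟨g * δ * g⁻¹, hΔ.conj_mem δ hδ g, fun i => by rw [hconj g δ hδ i, hv i]⟩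
  have hVne : V ≠ ⊤ := by
    intro h
    have : w₀ ∈ V := h ▸ AddSubgroup.mem_top w₀
    obtain ⟨δ, hδ, hv⟩ := this
    obtain ⟨i, hi⟩ := hw₀ δ hδ
    exact hi (hv i)
  obtain ⟨π, hπeq, hπne, hπker⟩ := keyA W hW0 hsimple s V hVst hVne
  classical
  set a : Fin s → (W →+ W) := fun i => π.comp (AddMonoidHom.single (fun _ : Fin s => W) i)
    with hadef
  have hsum : ∀ v : Fin s → W, π v = ∑ i, a i (v i) := by
    intro v
    conv_lhs => rw [← Finset.univ_sum_single v]
    rw [map_sum]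
    rfl
  have haeq : ∀ i, ∀ (g : Γ) (w : W), a i (g • w) = g • a i w := by
    intro i g w
    have h1 : (Pi.single i (g • w) : Fin s → W) = fun j => g • (Pi.single i w : Fin s → W) j := by
      funext j
      rcases eq_or_ne j i with rfl | hji
      · simp
      · simp [Pi.single_apply, hji]
    show π (Pi.single i (g • w) : Fin s → W) = g • π (Pi.single i w : Fin s → W)
    rw [h1, hπeq]
  have hcob : ∃ w : W, ∀ g : Γ, (∑ i, a i (ψ i g)) = g • w - w := by
    have hf : ∀ g h : Γ, π (fun i => ψ i (g * h)) =
        π (fun i => ψ i g) + g • π (fun i => ψ i h) := by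
      intro g h
      have : (fun i => ψ i (g * h)) =
          (fun i => ψ i g) + fun i => g • (fun i => ψ i h) i := by
        funext i; exact hcoc i g h
      rw [this, map_add, hπeq]
    have hfδ : ∀ δ ∈ Δ, π (fun i => ψ i δ) = 0 := by
      intro δ hδ
      exact hπker _ ⟨δ, hδ, fun i => rfl⟩
    obtain ⟨w, hw⟩ := hH1 (fun g => π (fun i => ψ i g)) hf hfδ
    exact ⟨w, fun g => by rw [← hsum, hw g]⟩
  have hzero := hindep a haeq hcob
  apply hπne
  refine AddMonoidHom.ext fun v => ?_
  rw [hsum v]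
  simp [hzero]
end

section
/- Let O be a discrete valuation ring with uniformizer ϖ, G a group, and M a free O-module equipped with an O-linear G-action. Assume: (i) the fixed module (M/ϖM)^G is zero; and (ii) there exists an integer n ≥ 0 such that for every m ≥ 1, ϖ^n annihilates H^1(G, M/ϖ^m M), i.e. for every 1-cocycle z : G → M/ϖ^m M the cocycle ϖ^n·z is a 1-coboundary. Then for every m ≥ 1 and every N ≥ m + n, the map H^1(G, M/ϖ^N M) → H^1(G, M/ϖ^m M) induced by the reduction M/ϖ^N M → M/ϖ^m M is the zero map: every 1-cocycle G → M/ϖ^N M becomes a 1-coboundary after reduction modulo ϖ^m. (This is the formal content of Corollary B.2 of the paper, whose continuous-cohomology hypotheses (i) and (ii) are supplied by Lazard's results.) -/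
/-- A function `z : G → M` represents a 1-cocycle of `G` with values in `M/ϖ^m M`:
the cocycle identity holds modulo `ϖ^m M`. -/
def IsCocycleMod {O G M : Type*} [CommRing O] [Group G] [AddCommGroup M] [Module O M]
    [DistribMulAction G M] (ϖ : O) (m : ℕ) (z : G → M) : Prop :=
  ∀ g h : G, ∃ v : M, z (g * h) - (z g + g • z h) = ϖ ^ m • v

/-- A function `z : G → M` represents a 1-coboundary of `G` with values in `M/ϖ^m M`:
there is `w ∈ M` with `z g ≡ g • w - w` modulo `ϖ^m M` for all `g`. -/
def IsCoboundaryMod {O G M : Type*} [CommRing O] [Group G] [AddCommGroup M] [Module O M]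
    [DistribMulAction G M] (ϖ : O) (m : ℕ) (z : G → M) : Prop :=
  ∃ w : M, ∀ g : G, ∃ v : M, z g - (g • w - w) = ϖ ^ m • v

/-- **Corollary B.2 (formal content).**  Let `O` be a discrete valuation ring with uniformizer
`ϖ`, `G` a group and `M` a free `O`-module with an `O`-linear `G`-action.  Assume
(i) `(M/ϖM)^G = 0`, and (ii) there is `n ≥ 0` such that `ϖ^n` annihilates `H¹(G, M/ϖ^m M)`
for every `m ≥ 1`.  Then for every `m ≥ 1` and every `N ≥ m + n`, the reduction map
`H¹(G, M/ϖ^N M) → H¹(G, M/ϖ^m M)` is zero: every 1-cocycle with values in `M/ϖ^N M`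
becomes a 1-coboundary after reduction modulo `ϖ^m`. -/
theorem reduction_of_cocycle_is_coboundary
    (O : Type*) [CommRing O] [IsDomain O] [IsDiscreteValuationRing O]
    (ϖ : O) (hϖ : Irreducible ϖ)
    (G : Type*) [Group G]
    (M : Type*) [AddCommGroup M] [Module O M] [Module.Free O M]
    [DistribMulAction G M] [SMulCommClass G O M]
    (n : ℕ)
    (hfix : ∀ x : M, (∀ g : G, ∃ v : M, g • x - x = ϖ • v) → ∃ v : M, x = ϖ • v)
    (hann : ∀ m : ℕ, 1 ≤ m → ∀ z : G → M, IsCocycleMod ϖ m z →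
      IsCoboundaryMod ϖ m (fun g => ϖ ^ n • z g)) :
    ∀ m : ℕ, 1 ≤ m → ∀ N : ℕ, m + n ≤ N → ∀ z : G → M, IsCocycleMod ϖ N z →
      IsCoboundaryMod ϖ m z := by
  have hϖ0 : ϖ ≠ 0 := hϖ.ne_zero
  -- divisibility lemma: if g•x - x ≡ 0 mod ϖ^k for all g, then x ∈ ϖ^k M
  have hdiv : ∀ k : ℕ, ∀ x : M, (∀ g : G, ∃ u : M, g • x - x = ϖ ^ k • u) →
      ∃ y : M, x = ϖ ^ k • y := by
    intro k
    induction k with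
    | zero => intro x _; exact ⟨x, by simp⟩
    | succ k ih =>
      intro x hx
      obtain ⟨y, hy⟩ := hfix x (fun g => by
        obtain ⟨u, hu⟩ := hx g
        exact ⟨ϖ ^ k • u, by rw [hu, pow_succ', mul_smul]⟩)
      obtain ⟨y', hy'⟩ := ih y (fun g => by
        obtain ⟨u, hu⟩ := hx g
        have : ϖ • (g • y - y) = ϖ • (ϖ ^ k • u) := by
          rw [smul_sub, ← smul_comm, ← hy, hu, pow_succ', mul_smul]
        exact ⟨u, smul_right_injective M hϖ0 this⟩)
      exact ⟨y', by rw [hy, hy', pow_succ', mul_smul]⟩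
  intro m hm N hN z hz
  obtain ⟨w, hw⟩ := hann N (by omega) z hz
  -- w is divisible by ϖ^n
  obtain ⟨w', hw'⟩ := hdiv n w (fun g => by
    obtain ⟨v, hv⟩ := hw g
    refine ⟨z g - ϖ ^ (N - n) • v, ?_⟩
    have hNn : (N : ℕ) = n + (N - n) := by omega
    rw [smul_sub, smul_smul, ← pow_add, ← hNn]
    have := hv
    simp only at this
    linear_combination (norm := abel) -this)
  refine ⟨w', fun g => ?_⟩
  obtain ⟨v, hv⟩ := hw g
  simp only at hv
  refine ⟨ϖ ^ (N - n - m) • v, ?_⟩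
  apply smul_right_injective M (pow_ne_zero n hϖ0)
  show ϖ ^ n • (z g - (g • w' - w')) = ϖ ^ n • (ϖ ^ m • ϖ ^ (N - n - m) • v)
  have hpow : ϖ ^ n • (ϖ ^ m • ϖ ^ (N - n - m) • v) = ϖ ^ N • v := by
    rw [smul_smul, smul_smul, ← pow_add, ← pow_add]
    congr 2
    omega
  rw [hpow, ← hv, hw', smul_sub, smul_sub, smul_comm g (ϖ ^ n) w']
end
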